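/- Let m be a nonnegative integer. For all complex numbers b and z, (1/π)·∫_ℂ e^{b·conj(w)}·q_m(conj(z)·w)·q_m(conj(w)·z)·e^{-|w|^2} dA(w) = q_m(conj(z)·(b + z)). -/

import Mathlib

open Complex MeasureTheory
open scoped ComplexConjugate

/-- `q_m(u)`, the Taylor polynomial of `e^u` of order `m-1`. -/
noncomputable def qpoly (m : ℕ) (u : ℂ) : ℂ :=
  ∑ k ∈ Finset.range m, u ^ k / (k.factorial : ℂ)

private lemma aux_pow_le (n : ℕ) (c t : ℝ) (ht : 0 ≤ t) :
    t ^ n * Real.exp (c * t) * Real.exp (-t ^ 2) ≤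
      (n.factorial : ℝ) * Real.exp (1 + c ^ 2) * Real.exp (-(1 / 2) * t ^ 2) := by
  have h0 : t ^ n / n.factorial ≤ Real.exp t :=
    le_trans (Finset.single_le_sum (f := fun i => t ^ i / i.factorial)
      (fun i _ => by positivity) (Finset.self_mem_range_succ n))
      (Real.sum_le_exp_of_nonneg ht (n + 1))
  have hn : (0:ℝ) < n.factorial := by positivity
  have h1 : t ^ n ≤ n.factorial * Real.exp t := by
    rw [div_le_iff₀ hn] at h0; linarith [h0]
  calc t ^ n * Real.exp (c * t) * Real.exp (-t ^ 2)
      ≤ (n.factorial * Real.exp t) * Real.exp (c * t) * Real.exp (-t ^ 2) := by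
        gcongr
    _ ≤ (n.factorial * Real.exp (t ^ 2 / 4 + 1)) * Real.exp (c ^ 2 + t ^ 2 / 4) *
          Real.exp (-t ^ 2) := by
        gcongr
        · nlinarith [sq_nonneg (t - 2)]
        · nlinarith [sq_nonneg (2 * c - t)]
    _ = (n.factorial : ℝ) * Real.exp (1 + c ^ 2) * Real.exp (-(1 / 2) * t ^ 2) := by
        rw [mul_assoc, mul_assoc, ← Real.exp_add, ← Real.exp_add, mul_assoc, ← Real.exp_add]
        congr 1
        ring

private lemma integrable_gauss_half :
    Integrable (fun w : ℂ => Real.exp (-(1 / 2) * ‖w‖ ^ 2)) := by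
  have h := (GaussianFourier.integrable_cexp_neg_mul_sq_norm_add (V := ℂ)
    (b := (1/2 : ℂ)) (by norm_num) 0 0).norm
  refine h.congr (Filter.Eventually.of_forall fun w => ?_)
  simp [Complex.norm_exp, ← Complex.ofReal_pow]

private lemma integrable_pow_gauss (n : ℕ) (c : ℝ) :
    Integrable (fun w : ℂ => ‖w‖ ^ n * Real.exp (c * ‖w‖) * Real.exp (-‖w‖ ^ 2)) := by
  refine (integrable_gauss_half.const_mul ((n.factorial : ℝ) * Real.exp (1 + c ^ 2))).mono'
    ?_ (Filter.Eventually.of_forall fun w => ?_)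
  · exact (((continuous_norm.pow n).mul
      ((continuous_const.mul continuous_norm).rexp)).mul
      (((continuous_norm.pow 2).neg).rexp)).aestronglyMeasurable
  · rw [Real.norm_of_nonneg (by positivity)]
    exact aux_pow_le n c ‖w‖ (norm_nonneg w)

private lemma norm_core (w : ℂ) (j k : ℕ) :
    ‖w ^ j * (conj w) ^ k * Complex.exp (-(‖w‖ : ℂ) ^ 2)‖
      = ‖w‖ ^ (j + k) * Real.exp (-‖w‖ ^ 2) := by
  simp only [norm_mul, norm_pow, Complex.norm_conj, Complex.norm_exp,
    ← Complex.ofReal_pow, ← Complex.ofReal_neg, Complex.ofReal_re, pow_add]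

private lemma integrable_core (j k : ℕ) :
    Integrable (fun w : ℂ => w ^ j * (conj w) ^ k * Complex.exp (-(‖w‖ : ℂ) ^ 2)) := by
  refine (integrable_pow_gauss (j + k) 0).mono'
    ?_ (Filter.Eventually.of_forall fun w => ?_)
  · exact (((continuous_pow j).mul (Complex.continuous_conj.pow k)).mul
      (Complex.continuous_exp.comp
        ((Complex.continuous_ofReal.comp continuous_norm).pow 2).neg)).aestronglyMeasurable
  · rw [norm_core]
    simp

private lemma cont_main (b : ℂ) (j k : ℕ) :
    Continuous (fun w : ℂ => Complex.exp (b * conj w) * w ^ j * (conj w) ^ k *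
      Complex.exp (-(‖w‖ : ℂ) ^ 2)) :=
  (((Complex.continuous_exp.comp (continuous_const.mul Complex.continuous_conj)).mul
    (continuous_pow j)).mul (Complex.continuous_conj.pow k)).mul
    (Complex.continuous_exp.comp ((Complex.continuous_ofReal.comp continuous_norm).pow 2).neg)

private lemma integrable_main (b : ℂ) (j k : ℕ) :
    Integrable (fun w : ℂ => Complex.exp (b * conj w) * w ^ j * (conj w) ^ k *
      Complex.exp (-(‖w‖ : ℂ) ^ 2)) := by
  refine (integrable_pow_gauss (j + k) ‖b‖).mono'
    (cont_main b j k).aestronglyMeasurable (Filter.Eventually.of_forall fun w => ?_)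
  have h1 : ‖Complex.exp (b * conj w)‖ ≤ Real.exp (‖b‖ * ‖w‖) := by
    rw [Complex.norm_exp]
    refine Real.exp_le_exp.2 ?_
    calc (b * conj w).re ≤ ‖b * conj w‖ := Complex.re_le_norm _
      _ = ‖b‖ * ‖w‖ := by simp
  calc ‖Complex.exp (b * conj w) * w ^ j * (conj w) ^ k * Complex.exp (-(‖w‖ : ℂ) ^ 2)‖
      = ‖Complex.exp (b * conj w)‖ * ‖w ^ j * (conj w) ^ k * Complex.exp (-(‖w‖ : ℂ) ^ 2)‖ := by
        rw [← norm_mul]; ring_nf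
    _ ≤ Real.exp (‖b‖ * ‖w‖) * (‖w‖ ^ (j + k) * Real.exp (-‖w‖ ^ 2)) := by
        rw [norm_core]; gcongr
    _ = ‖w‖ ^ (j + k) * Real.exp (‖b‖ * ‖w‖) * Real.exp (-‖w‖ ^ 2) := by ring

private lemma angular (n : ℤ) :
    (∫ θ in Set.Ioo (-Real.pi) Real.pi, Complex.exp (n * θ * Complex.I))
      = if n = 0 then 2 * Real.pi else 0 := by
  rw [← MeasureTheory.integral_Ioc_eq_integral_Ioo,
    ← intervalIntegral.integral_of_le (by linarith [Real.pi_pos] : -Real.pi ≤ Real.pi)]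
  rcases eq_or_ne n 0 with hn | hn
  · simp [hn, two_mul]
  · have h : ∀ θ : ℝ, (n : ℂ) * θ * Complex.I = (n * Complex.I) * θ := fun θ => by ring
    simp_rw [h]
    rw [integral_exp_mul_complex (by simp [Complex.I_ne_zero, hn])]
    have e1 : (n : ℂ) * Complex.I * Real.pi = n * (Real.pi * Complex.I) := by ring
    have e2 : (n : ℂ) * Complex.I * (-Real.pi : ℝ) = ((-n : ℤ) : ℂ) * (Real.pi * Complex.I) := by
      push_cast; ring
    rw [e1, e2, Complex.exp_int_mul, Complex.exp_int_mul, Complex.exp_pi_mul_I]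
    have h3 : ((-1 : ℂ)) ^ (-n) = (-1) ^ n := by
      rw [zpow_neg, ← inv_zpow, inv_neg, inv_one]
    rw [h3, sub_self, zero_div, if_neg hn, Complex.ofReal_zero]

private lemma radial (p : ℕ) :
    (∫ r in Set.Ioi (0 : ℝ), r ^ (p + 1) * Real.exp (-r ^ 2))
      = (1 / 2) * Real.Gamma (((p : ℝ) + 2) / 2) := by
  have h := _root_.integral_rpow_mul_exp_neg_rpow (p := 2) (q := (p + 1 : ℝ)) (by norm_num)
    (by linarith [Nat.cast_nonneg (α := ℝ) p])
  rw [show ((p : ℝ) + 1 + 1) / 2 = ((p : ℝ) + 2) / 2 by ring] at h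
  rw [← h]
  refine setIntegral_congr_fun measurableSet_Ioi fun x hx => ?_
  have hx0 : (0 : ℝ) ≤ x := le_of_lt hx
  rw [show ((p : ℝ) + 1) = ((p + 1 : ℕ) : ℝ) by push_cast; ring,
    Real.rpow_natCast, show (2 : ℝ) = ((2 : ℕ) : ℝ) by norm_num, Real.rpow_natCast]

private lemma moment (j k : ℕ) :
    (∫ w : ℂ, w ^ j * (conj w) ^ k * Complex.exp (-(‖w‖ : ℂ) ^ 2))
      = if j = k then (Real.pi : ℂ) * j.factorial else 0 := by
  rw [← Complex.integral_comp_polarCoord_symm]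
  have key : ∀ p ∈ polarCoord.target,
      p.1 • ((Complex.polarCoord.symm p) ^ j * (conj (Complex.polarCoord.symm p)) ^ k *
        Complex.exp (-(‖Complex.polarCoord.symm p‖ : ℂ) ^ 2))
      = (fun r : ℝ => ((r ^ (j + k + 1) * Real.exp (-r ^ 2) : ℝ) : ℂ)) p.1 *
        (fun θ : ℝ => Complex.exp ((((j : ℤ) - (k : ℤ) : ℤ) : ℂ) * θ * Complex.I)) p.2 := by
    rintro ⟨r, θ⟩ hp
    have hr : 0 < r := hp.1
    have hw : Complex.polarCoord.symm (r, θ) = (r : ℂ) * Complex.exp (θ * Complex.I) := by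
      rw [Complex.polarCoord_symm_apply, Complex.exp_mul_I, Complex.ofReal_cos,
        Complex.ofReal_sin]
    have hnorm : (‖Complex.polarCoord.symm (r, θ)‖ : ℂ) = (r : ℂ) := by
      rw [Complex.norm_polarCoord_symm]
      simp [abs_of_pos hr]
    have hconj : conj (Complex.polarCoord.symm (r, θ))
        = (r : ℂ) * Complex.exp (-(θ : ℂ) * Complex.I) := by
      rw [hw, map_mul, Complex.conj_ofReal, ← Complex.exp_conj]
      congr 1
      simp [Complex.conj_I]
    simp only
    rw [hnorm, hconj, hw, Complex.real_smul, mul_pow, mul_pow,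
      ← Complex.exp_nat_mul, ← Complex.exp_nat_mul]
    have hR : ((r ^ (j + k + 1) * Real.exp (-r ^ 2) : ℝ) : ℂ) *
        Complex.exp ((((j : ℤ) - (k : ℤ) : ℤ) : ℂ) * θ * Complex.I)
        = (r : ℂ) ^ (j + k + 1) * (Complex.exp (-(r : ℂ) ^ 2) *
          Complex.exp (((j : ℂ) - k) * θ * Complex.I)) := by
      push_cast [Complex.ofReal_exp]
      ring
    rw [hR, ← Complex.exp_add,
      show -(r : ℂ) ^ 2 + ((j : ℂ) - k) * θ * Complex.I
        = ((j : ℂ) * (θ * Complex.I) + (k : ℂ) * (-(θ : ℂ) * Complex.I)) + (-(r : ℂ) ^ 2) by ring]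
    rw [Complex.exp_add, Complex.exp_add]
    ring
  rw [setIntegral_congr_fun polarCoord.open_target.measurableSet key, polarCoord_target,
    Measure.volume_eq_prod,
    setIntegral_prod_mul (fun r : ℝ => ((r ^ (j + k + 1) * Real.exp (-r ^ 2) : ℝ) : ℂ))
      (fun θ : ℝ => Complex.exp ((((j : ℤ) - (k : ℤ) : ℤ) : ℂ) * θ * Complex.I))
      (Set.Ioi 0) (Set.Ioo (-Real.pi) Real.pi)]
  have hof : (∫ x in Set.Ioi (0 : ℝ), ((x ^ (j + k + 1) * Real.exp (-x ^ 2) : ℝ) : ℂ))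
      = ((∫ x in Set.Ioi (0 : ℝ), x ^ (j + k + 1) * Real.exp (-x ^ 2) : ℝ) : ℂ) :=
    integral_ofReal
  rw [hof, radial (j + k), angular]
  rcases eq_or_ne j k with h | h
  · subst h
    rw [if_pos rfl, if_pos (by ring)]
    have h2 : (((j + j : ℕ) : ℝ) + 2) / 2 = (j : ℝ) + 1 := by push_cast; ring
    rw [h2, Real.Gamma_nat_eq_factorial]
    push_cast
    ring
  · rw [if_neg h, if_neg (show ¬((j : ℤ) - (k : ℤ) = 0) by omega)]
    simp

private lemma sum_eval (b : ℂ) (j k N : ℕ) (hN : j < N) :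
    (∑ n ∈ Finset.range N, b ^ n / n.factorial *
        (if j = n + k then (Real.pi : ℂ) * j.factorial else 0))
      = if k ≤ j then (Real.pi : ℂ) * b ^ (j - k) * j.factorial / (j - k).factorial else 0 := by
  rcases le_or_gt k j with hk | hk
  · rw [if_pos hk]
    have hcond : ∀ n, (j = n + k) = (n = j - k) := fun n => by
      apply propext; omega
    simp_rw [hcond, mul_ite, mul_zero]
    rw [Finset.sum_ite_eq' (Finset.range N) (j - k)
      (fun n => b ^ n / n.factorial * ((Real.pi : ℂ) * j.factorial)),
      if_pos (Finset.mem_range.2 (by omega))]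
    ring
  · rw [if_neg (by omega)]
    refine Finset.sum_eq_zero fun n _ => ?_
    rw [if_neg (by omega), mul_zero]

private lemma expmoment (b : ℂ) (j k : ℕ) :
    (∫ w : ℂ, Complex.exp (b * conj w) * w ^ j * (conj w) ^ k *
        Complex.exp (-(‖w‖ : ℂ) ^ 2))
      = if k ≤ j then (Real.pi : ℂ) * b ^ (j - k) * j.factorial / (j - k).factorial else 0 := by
  set f : ℂ → ℂ := fun w => Complex.exp (b * conj w) * w ^ j * (conj w) ^ k *
    Complex.exp (-(‖w‖ : ℂ) ^ 2) with hf
  set F : ℕ → ℂ → ℂ := fun N w => (∑ n ∈ Finset.range N, (b * conj w) ^ n / n.factorial) *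
    (w ^ j * (conj w) ^ k * Complex.exp (-(‖w‖ : ℂ) ^ 2)) with hF
  have hFmeas : ∀ N, AEStronglyMeasurable (F N) volume := by
    intro N
    refine Continuous.aestronglyMeasurable ?_
    refine Continuous.mul ?_ (((continuous_pow j).mul (Complex.continuous_conj.pow k)).mul
      (Complex.continuous_exp.comp ((Complex.continuous_ofReal.comp continuous_norm).pow 2).neg))
    exact continuous_finset_sum _ fun n _ =>
      (((continuous_const.mul Complex.continuous_conj).pow n).div_const _)
  have hbound : ∀ N, ∀ᵐ w : ℂ, ‖F N w‖ ≤
      ‖w‖ ^ (j + k) * Real.exp (‖b‖ * ‖w‖) * Real.exp (-‖w‖ ^ 2) := by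
    intro N
    refine Filter.Eventually.of_forall fun w => ?_
    simp only [hF]
    rw [norm_mul, norm_core]
    have h1 : ‖∑ n ∈ Finset.range N, (b * conj w) ^ n / (n.factorial : ℂ)‖
        ≤ Real.exp (‖b‖ * ‖w‖) := by
      refine le_trans (norm_sum_le _ _) ?_
      refine le_trans ?_ (Real.sum_le_exp_of_nonneg (by positivity) N)
      refine Finset.sum_le_sum fun n _ => ?_
      rw [norm_div, norm_pow, norm_mul]
      simp [Complex.norm_conj, Complex.norm_natCast]
    calc ‖∑ n ∈ Finset.range N, (b * conj w) ^ n / (n.factorial : ℂ)‖ *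
          (‖w‖ ^ (j + k) * Real.exp (-‖w‖ ^ 2))
        ≤ Real.exp (‖b‖ * ‖w‖) * (‖w‖ ^ (j + k) * Real.exp (-‖w‖ ^ 2)) := by gcongr
      _ = ‖w‖ ^ (j + k) * Real.exp (‖b‖ * ‖w‖) * Real.exp (-‖w‖ ^ 2) := by ring
  have hlim : ∀ᵐ w : ℂ, Filter.Tendsto (fun N => F N w) Filter.atTop (nhds (f w)) := by
    refine Filter.Eventually.of_forall fun w => ?_
    have h := (NormedSpace.expSeries_div_hasSum_exp (b * conj w)).tendsto_sum_nat
    rw [← Complex.exp_eq_exp_ℂ] at h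
    have h2 := h.mul_const (w ^ j * (conj w) ^ k * Complex.exp (-(‖w‖ : ℂ) ^ 2))
    have hfeq : f w = Complex.exp (b * conj w) *
        (w ^ j * (conj w) ^ k * Complex.exp (-(‖w‖ : ℂ) ^ 2)) := by rw [hf]; ring
    rw [hfeq]
    exact h2
  have hkey := tendsto_integral_of_dominated_convergence _ hFmeas
    (integrable_pow_gauss (j + k) ‖b‖) hbound hlim
  have hIntN : ∀ N, (∫ w, F N w)
      = ∑ n ∈ Finset.range N, b ^ n / n.factorial *
          (if j = n + k then (Real.pi : ℂ) * j.factorial else 0) := by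
    intro N
    have hFrw : F N = fun w => ∑ n ∈ Finset.range N,
        b ^ n / n.factorial * (w ^ j * (conj w) ^ (n + k) * Complex.exp (-(‖w‖ : ℂ) ^ 2)) := by
      funext w
      rw [hF]
      simp only [Finset.sum_mul]
      refine Finset.sum_congr rfl fun n _ => ?_
      rw [mul_pow, pow_add]
      ring
    rw [hFrw, integral_finset_sum _ fun n _ => (integrable_core j (n + k)).const_mul _]
    refine Finset.sum_congr rfl fun n _ => ?_
    rw [integral_const_mul, moment j (n + k)]
  have hev : ∀ᶠ N in Filter.atTop, (∫ w, F N w)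
      = if k ≤ j then (Real.pi : ℂ) * b ^ (j - k) * j.factorial / (j - k).factorial else 0 := by
    refine Filter.eventually_atTop.2 ⟨j + 1, fun N hN => ?_⟩
    rw [hIntN, sum_eval b j k N (by omega)]
  exact tendsto_nhds_unique hkey (Filter.Tendsto.congr' (hev.mono fun N h => h.symm) tendsto_const_nhds)

private lemma inner_binom (j : ℕ) (z b : ℂ) :
    (∑ k ∈ Finset.range (j + 1), z ^ k * b ^ (j - k) *
        ((j.factorial : ℂ) / (k.factorial * (j - k).factorial)))
      = (z + b) ^ j := by
  rw [add_pow]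
  refine Finset.sum_congr rfl fun k hk => ?_
  rw [Nat.cast_choose ℂ (Finset.mem_range_succ_iff.mp hk)]

theorem stmt_9 (m : ℕ) (b z : ℂ) :
    (Real.pi : ℂ)⁻¹ * ∫ w : ℂ, Complex.exp (b * conj w) * qpoly m (conj z * w) *
        qpoly m (conj w * z) * Complex.exp (-(‖w‖ : ℂ) ^ 2) =
      qpoly m (conj z * (b + z)) := by
  have hπ : (Real.pi : ℂ) ≠ 0 := by
    exact_mod_cast Real.pi_ne_zero
  have hrw : (fun w : ℂ => Complex.exp (b * conj w) * qpoly m (conj z * w) *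
      qpoly m (conj w * z) * Complex.exp (-(‖w‖ : ℂ) ^ 2))
      = fun w => ∑ j ∈ Finset.range m, ∑ k ∈ Finset.range m,
          ((conj z) ^ j * z ^ k / (j.factorial * k.factorial)) *
            (Complex.exp (b * conj w) * w ^ j * (conj w) ^ k *
              Complex.exp (-(‖w‖ : ℂ) ^ 2)) := by
    funext w
    simp only [qpoly, Finset.mul_sum, Finset.sum_mul]
    rw [Finset.sum_comm]
    refine Finset.sum_congr rfl fun j _ => Finset.sum_congr rfl fun k _ => ?_
    ring
  rw [hrw, integral_finset_sum _ fun j _ =>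
    integrable_finset_sum _ fun k _ => (integrable_main b j k).const_mul _]
  have hstep : ∀ j ∈ Finset.range m,
      (∫ w : ℂ, ∑ k ∈ Finset.range m,
          ((conj z) ^ j * z ^ k / (j.factorial * k.factorial)) *
            (Complex.exp (b * conj w) * w ^ j * (conj w) ^ k *
              Complex.exp (-(‖w‖ : ℂ) ^ 2)))
        = ∑ k ∈ Finset.range m, ((conj z) ^ j * z ^ k / (j.factorial * k.factorial)) *
            (if k ≤ j then (Real.pi : ℂ) * b ^ (j - k) * j.factorial / (j - k).factorial
              else 0) := by
    intro j _
    rw [integral_finset_sum _ fun k _ => (integrable_main b j k).const_mul _]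
    exact Finset.sum_congr rfl fun k _ => by rw [integral_const_mul, expmoment]
  rw [Finset.sum_congr rfl hstep, Finset.mul_sum, qpoly]
  refine Finset.sum_congr rfl fun j hj => ?_
  have hjm : j + 1 ≤ m := Finset.mem_range.mp hj
  have hsub : (∑ k ∈ Finset.range m, ((conj z) ^ j * z ^ k /
        (j.factorial * k.factorial)) *
        (if k ≤ j then (Real.pi : ℂ) * b ^ (j - k) * j.factorial / (j - k).factorial else 0))
      = ∑ k ∈ Finset.range (j + 1), ((conj z) ^ j * z ^ k /
        (j.factorial * k.factorial)) *
        ((Real.pi : ℂ) * b ^ (j - k) * j.factorial / (j - k).factorial) := by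
    rw [← Finset.sum_subset (Finset.range_subset_range.mpr hjm) (fun k _ hk => by
      rw [if_neg (by simpa using fun h => hk (Finset.mem_range_succ_iff.mpr h)), mul_zero])]
    refine Finset.sum_congr rfl fun k hk => ?_
    rw [if_pos (Finset.mem_range_succ_iff.mp hk)]
  rw [hsub]
  have hfac : (∑ k ∈ Finset.range (j + 1), ((conj z) ^ j * z ^ k /
        (j.factorial * k.factorial)) *
        ((Real.pi : ℂ) * b ^ (j - k) * j.factorial / (j - k).factorial))
      = (Real.pi : ℂ) * (conj z) ^ j / j.factorial *
          ∑ k ∈ Finset.range (j + 1), z ^ k * b ^ (j - k) *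
            ((j.factorial : ℂ) / (k.factorial * (j - k).factorial)) := by
    rw [Finset.mul_sum]
    exact Finset.sum_congr rfl fun k _ => by ring
  rw [hfac, inner_binom,
    show (Real.pi : ℂ)⁻¹ * ((Real.pi : ℂ) * (starRingEnd ℂ) z ^ j / (j.factorial : ℂ) *
        (z + b) ^ j)
      = ((Real.pi : ℂ)⁻¹ * (Real.pi : ℂ)) *
          ((starRingEnd ℂ) z ^ j * (z + b) ^ j / (j.factorial : ℂ)) by ring,
    inv_mul_cancel₀ hπ, one_mul, mul_pow]
  ring
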